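/- Let F be a field of characteristic ≠ 2, V a vector space over F with a nondegenerate quadratic form Q, and φ : V → V an orthogonal linear transformation with associated Bogolyubov automorphism [φ] of Cl(V,Q). If v₁, v₂ ∈ V are linearly independent and [φ](ι(v₁)ι(v₂)) = ι(v₁)ι(v₂), then the subspace F·v₁ + F·v₂ is φ-invariant. -/

import Mathlib

/-- If `v₁, v₂ ∈ V` are linearly independent and the Bogolyubov automorphism `[φ]`
fixes `ι(v₁) ι(v₂)`, then the subspace `F·v₁ + F·v₂` is `φ`-invariant. -/
theorem span_invariant_of_bogolyubov_fixes_product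
    {F V : Type*} [Field F] [AddCommGroup V] [Module F V]
    (hchar : (2 : F) ≠ 0)
    (Q : QuadraticForm F V)
    (hQ : ∀ v : V, (∀ w : V, QuadraticMap.polar Q v w = 0) → v = 0)
    (φ : V →ₗ[F] V) (hφbij : Function.Bijective φ)
    (hφQ : ∀ v : V, Q (φ v) = Q v)
    (θ : CliffordAlgebra Q ≃ₐ[F] CliffordAlgebra Q)
    (hθ : ∀ v : V, θ (CliffordAlgebra.ι Q v) = CliffordAlgebra.ι Q (φ v))
    (v₁ v₂ : V) (hindep : LinearIndependent F ![v₁, v₂])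
    (hfix : θ (CliffordAlgebra.ι Q v₁ * CliffordAlgebra.ι Q v₂) =
      CliffordAlgebra.ι Q v₁ * CliffordAlgebra.ι Q v₂) :
    ∀ w ∈ Submodule.span F ({v₁, v₂} : Set V),
      φ w ∈ Submodule.span F ({v₁, v₂} : Set V) := by
  classical
  have h2 : Invertible (2 : F) := invertibleOfNonzero hchar
  set ι := CliffordAlgebra.ι Q with hι_def
  -- ι is injective
  have hι : Function.Injective ι := by
    intro a b hab
    have := congrArg (CliffordAlgebra.equivExterior Q) hab
    simp only [CliffordAlgebra.equivExterior, CliffordAlgebra.changeFormEquiv_apply,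
      hι_def, CliffordAlgebra.changeForm_ι] at this
    exact (ExteriorAlgebra.ι_inj F a b).mp this
  -- commutator identity
  have key : ∀ w a b : V, ι w * (ι a * ι b) - (ι a * ι b) * ι w
      = ι (QuadraticMap.polar Q w a • b - QuadraticMap.polar Q w b • a) := by
    intro w a b
    have e1 : ι w * ι a = algebraMap F (CliffordAlgebra Q) (QuadraticMap.polar Q w a)
        - ι a * ι w := eq_sub_of_add_eq (CliffordAlgebra.ι_mul_ι_add_swap w a)
    have e2 : ι w * ι b = algebraMap F (CliffordAlgebra Q) (QuadraticMap.polar Q w b)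
        - ι b * ι w := eq_sub_of_add_eq (CliffordAlgebra.ι_mul_ι_add_swap w b)
    calc ι w * (ι a * ι b) - (ι a * ι b) * ι w
        = (ι w * ι a) * ι b - (ι a * ι b) * ι w := by rw [mul_assoc (ι w) (ι a) (ι b)]
      _ = (algebraMap F (CliffordAlgebra Q) (QuadraticMap.polar Q w a) - ι a * ι w) * ι b
          - (ι a * ι b) * ι w := by rw [e1]
      _ = algebraMap F (CliffordAlgebra Q) (QuadraticMap.polar Q w a) * ι b
          - ι a * (ι w * ι b) - (ι a * ι b) * ι w := by
            rw [sub_mul, mul_assoc, mul_assoc]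
      _ = algebraMap F (CliffordAlgebra Q) (QuadraticMap.polar Q w a) * ι b
          - ι a * (algebraMap F (CliffordAlgebra Q) (QuadraticMap.polar Q w b) - ι b * ι w)
          - (ι a * ι b) * ι w := by rw [e2]
      _ = algebraMap F (CliffordAlgebra Q) (QuadraticMap.polar Q w a) * ι b
          - ι a * algebraMap F (CliffordAlgebra Q) (QuadraticMap.polar Q w b) := by noncomm_ring
      _ = algebraMap F (CliffordAlgebra Q) (QuadraticMap.polar Q w a) * ι b
          - algebraMap F (CliffordAlgebra Q) (QuadraticMap.polar Q w b) * ι a := by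
            rw [← Algebra.commutes (QuadraticMap.polar Q w b) (ι a)]
      _ = QuadraticMap.polar Q w a • ι b - QuadraticMap.polar Q w b • ι a := by
            rw [Algebra.smul_def, Algebra.smul_def]
      _ = ι (QuadraticMap.polar Q w a • b - QuadraticMap.polar Q w b • a) := by
            rw [map_sub, map_smul, map_smul]
  -- the fixed-product equation
  have hE : ι (φ v₁) * ι (φ v₂) = ι v₁ * ι v₂ := by
    rw [← hfix, map_mul, hθ, hθ]
  -- the main pointwise identity
  have P : ∀ w : V, QuadraticMap.polar Q w (φ v₁) • φ v₂
      - QuadraticMap.polar Q w (φ v₂) • φ v₁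
      = QuadraticMap.polar Q w v₁ • v₂ - QuadraticMap.polar Q w v₂ • v₁ := by
    intro w
    apply hι
    rw [← key w (φ v₁) (φ v₂), ← key w v₁ v₂, hE]
  -- φ v₁, φ v₂ are linearly independent
  have hindepφ : LinearIndependent F ![φ v₁, φ v₂] := by
    have := hindep.map' φ (LinearMap.ker_eq_bot.mpr hφbij.1)
    have heq : φ ∘ ![v₁, v₂] = ![φ v₁, φ v₂] := by
      ext i; fin_cases i <;> rfl
    rwa [heq] at this
  -- existence of the separating vector
  have exists_w : ∀ a b : V, LinearIndependent F ![a, b] →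
      ∃ w, QuadraticMap.polar Q w b = 0 ∧ QuadraticMap.polar Q w a ≠ 0 := by
    intro a b hab
    by_contra hcon
    push_neg at hcon
    -- b ≠ 0
    have hb0 : b ≠ 0 := by
      intro hb
      have := (LinearIndependent.pair_iff.mp hab) 0 1 (by simp [hb])
      exact one_ne_zero this.2
    obtain ⟨u, hu⟩ : ∃ u, QuadraticMap.polar Q u b ≠ 0 := by
      by_contra hall
      push_neg at hall
      exact hb0 (hQ b fun w => by rw [QuadraticMap.polar_comm]; exact hall w)
    set c : F := QuadraticMap.polar Q u a / QuadraticMap.polar Q u b with hc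
    have hall : ∀ w, QuadraticMap.polar Q w a = c * QuadraticMap.polar Q w b := by
      intro w
      have hw : QuadraticMap.polar Q
          (w - (QuadraticMap.polar Q w b / QuadraticMap.polar Q u b) • u) b = 0 := by
        rw [QuadraticMap.polar_sub_left, QuadraticMap.polar_smul_left, smul_eq_mul]
        field_simp
        simp
      have h1 := hcon _ hw
      rw [QuadraticMap.polar_sub_left, QuadraticMap.polar_smul_left, smul_eq_mul,
        sub_eq_zero] at h1
      rw [h1, hc]
      field_simp
    have : a - c • b = 0 := by
      apply hQ
      intro w
      rw [QuadraticMap.polar_comm, QuadraticMap.polar_sub_right,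
        QuadraticMap.polar_smul_right, smul_eq_mul, hall w, sub_self]
    have h1c := (LinearIndependent.pair_iff.mp hab) 1 (-c)
      (by rw [one_smul, neg_smul, ← sub_eq_add_neg, this])
    exact one_ne_zero h1c.1
  -- φ v₂ ∈ span
  have hmem : ∀ x : V, x ∈ Submodule.span F ({v₁, v₂} : Set V) ↔
      ∃ m n : F, m • v₁ + n • v₂ = x := fun x => Submodule.mem_span_pair
  have hv1 : v₁ ∈ Submodule.span F ({v₁, v₂} : Set V) :=
    Submodule.subset_span (Set.mem_insert _ _)
  have hv2 : v₂ ∈ Submodule.span F ({v₁, v₂} : Set V) :=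
    Submodule.subset_span (Set.mem_insert_of_mem _ rfl)
  have hφv2 : φ v₂ ∈ Submodule.span F ({v₁, v₂} : Set V) := by
    obtain ⟨w, hw0, hwne⟩ := exists_w (φ v₁) (φ v₂) hindepφ
    have := P w
    rw [hw0, zero_smul, sub_zero] at this
    have : φ v₂ = (QuadraticMap.polar Q w (φ v₁))⁻¹ •
        (QuadraticMap.polar Q w v₁ • v₂ - QuadraticMap.polar Q w v₂ • v₁) := by
      rw [← this, smul_smul, inv_mul_cancel₀ hwne, one_smul]
    rw [this]
    exact Submodule.smul_mem _ _ (Submodule.sub_mem _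
      (Submodule.smul_mem _ _ hv2) (Submodule.smul_mem _ _ hv1))
  have hindepφ' : LinearIndependent F ![φ v₂, φ v₁] := by
    rw [LinearIndependent.pair_iff] at hindepφ ⊢
    intro s t hst
    have := hindepφ t s (by rw [add_comm] at hst; exact hst)
    exact ⟨this.2, this.1⟩
  have hφv1 : φ v₁ ∈ Submodule.span F ({v₁, v₂} : Set V) := by
    obtain ⟨w, hw0, hwne⟩ := exists_w (φ v₂) (φ v₁) hindepφ'
    have h := P w
    rw [hw0, zero_smul, zero_sub] at h
    have : φ v₁ = (-(QuadraticMap.polar Q w (φ v₂)))⁻¹ •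
        (QuadraticMap.polar Q w v₁ • v₂ - QuadraticMap.polar Q w v₂ • v₁) := by
      rw [← h, smul_neg, smul_smul, inv_neg, neg_mul, inv_mul_cancel₀ hwne, neg_smul,
        one_smul, neg_neg]
    rw [this]
    exact Submodule.smul_mem _ _ (Submodule.sub_mem _
      (Submodule.smul_mem _ _ hv2) (Submodule.smul_mem _ _ hv1))
  -- conclude
  intro w hw
  obtain ⟨m, n, rfl⟩ := (hmem w).mp hw
  rw [map_add, map_smul, map_smul]
  exact Submodule.add_mem _ (Submodule.smul_mem _ _ hφv1) (Submodule.smul_mem _ _ hφv2)
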